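/- Let L > 1 and ε ∈ (0,1). Then there exists a unique x₀ ∈ (0, π/2) such that cos(x₀) = ε·cos(x₀/L); moreover, for every x with 0 ≤ x < x₀ one has cos(x) > ε·cos(x/L), and for every x with x₀ < x < π/2 one has cos(x) < ε·cos(x/L). Consequently, the function u_{ε,L}(x) = min(cos(x/L), (1/ε)·cos(x)) equals cos(x/L) for |x| ≤ x₀ and equals (1/ε)·cos(x) for x₀ ≤ |x| ≤ π/2. -/

import Mathlib

open Real Set

/-- For `L > 1` and `ε ∈ (0,1)`, the graphs of `cos x` and `ε·cos(x/L)` cross at a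
unique point `x₀ ∈ (0, π/2)`; before it `cos x > ε·cos(x/L)` and after it
`cos x < ε·cos(x/L)`. Consequently `min(cos(x/L), (1/ε)·cos x)` equals `cos(x/L)`
for `|x| ≤ x₀` and `(1/ε)·cos x` for `x₀ ≤ |x| ≤ π/2`. -/
theorem stmt_7 (L ε : ℝ) (hL : 1 < L) (hε₀ : 0 < ε) (hε₁ : ε < 1) :
    ∃ x₀ ∈ Set.Ioo 0 (π / 2),
      Real.cos x₀ = ε * Real.cos (x₀ / L) ∧
      (∀ y ∈ Set.Ioo 0 (π / 2), Real.cos y = ε * Real.cos (y / L) → y = x₀) ∧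
      (∀ x, 0 ≤ x → x < x₀ → Real.cos x > ε * Real.cos (x / L)) ∧
      (∀ x, x₀ < x → x < π / 2 → Real.cos x < ε * Real.cos (x / L)) ∧
      (∀ x, |x| ≤ x₀ →
        min (Real.cos (x / L)) ((1 / ε) * Real.cos x) = Real.cos (x / L)) ∧
      (∀ x, x₀ ≤ |x| → |x| ≤ π / 2 →
        min (Real.cos (x / L)) ((1 / ε) * Real.cos x) = (1 / ε) * Real.cos x) := by
  have hL0 : (0:ℝ) < L := lt_trans one_pos hL
  have hπ : (0:ℝ) < π := Real.pi_pos
  set h : ℝ → ℝ := fun x => ε * Real.cos (x / L) - Real.cos x with hh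
  have hcont : Continuous h := by
    apply Continuous.sub
    · exact continuous_const.mul (Real.continuous_cos.comp (continuous_id.div_const L))
    · exact Real.continuous_cos
  have hderiv : ∀ x : ℝ, HasDerivAt h (Real.sin x - ε / L * Real.sin (x / L)) x := by
    intro x
    have h1 : HasDerivAt (fun y : ℝ => y / L) (1 / L) x := (hasDerivAt_id x).div_const L
    have h2 : HasDerivAt (fun y : ℝ => Real.cos (y / L)) (-Real.sin (x / L) * (1 / L)) x :=
      by have := (Real.hasDerivAt_cos (x / L)).comp x h1; exact this
    have h3 := (h2.const_mul ε).sub (Real.hasDerivAt_cos x)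
    rw [show Real.sin x - ε / L * Real.sin (x / L) = ε * (-Real.sin (x / L) * (1 / L)) - -Real.sin x by ring]
    exact h3
  have hmono : StrictMonoOn h (Icc 0 (π/2)) := by
    apply strictMonoOn_of_deriv_pos (convex_Icc _ _) hcont.continuousOn
    intro x hx
    rw [interior_Icc] at hx
    rw [(hderiv x).deriv]
    have hx0 : 0 < x := hx.1
    have hx2 : x < π/2 := hx.2
    have hxL0 : 0 < x / L := div_pos hx0 hL0
    have hxL : x / L < x := by
      rw [div_lt_iff₀ hL0]; nlinarith
    have hs : Real.sin (x / L) < Real.sin x := by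
      apply Real.strictMonoOn_sin ⟨by linarith, by linarith⟩ ⟨by linarith, by linarith⟩ hxL
    have hs0 : 0 < Real.sin (x / L) := Real.sin_pos_of_pos_of_lt_pi hxL0 (by linarith)
    have hεL : ε / L < 1 := by
      rw [div_lt_one hL0]; linarith
    nlinarith
  have h0 : h 0 < 0 := by
    simp only [hh, zero_div, Real.cos_zero, mul_one]
    linarith
  have hpi2 : 0 < h (π/2) := by
    have hc : 0 < Real.cos (π/2 / L) := by
      apply Real.cos_pos_of_mem_Ioo
      constructor
      · have : 0 < π / 2 / L := by positivity
        linarith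
      · rw [div_lt_iff₀ hL0]; nlinarith
    simp only [hh, Real.cos_pi_div_two, sub_zero]
    positivity
  obtain ⟨x₀, hx₀mem, hx₀⟩ :=
    intermediate_value_Ioo (by positivity : (0:ℝ) ≤ π/2) hcont.continuousOn ⟨h0, hpi2⟩
  have hx₀Icc : x₀ ∈ Icc 0 (π/2) := ⟨hx₀mem.1.le, hx₀mem.2.le⟩
  have key_lt : ∀ x, 0 ≤ x → x < x₀ → h x < 0 := by
    intro x hx hxx
    have : h x < h x₀ := hmono ⟨hx, by linarith [hx₀mem.2]⟩ hx₀Icc hxx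
    linarith [this, hx₀.le, hx₀.ge]
  have key_gt : ∀ x, x₀ < x → x ≤ π/2 → 0 < h x := by
    intro x hxx hx
    have : h x₀ < h x := hmono hx₀Icc ⟨by linarith [hx₀mem.1], hx⟩ hxx
    linarith [this, hx₀.le, hx₀.ge]
  refine ⟨x₀, hx₀mem, ?_, ?_, ?_, ?_, ?_, ?_⟩
  · have : ε * Real.cos (x₀ / L) - Real.cos x₀ = 0 := hx₀
    linarith
  · intro y hy heq
    have hy0 : h y = 0 := by simp only [hh]; linarith
    by_contra hne
    rcases lt_or_gt_of_ne hne with hlt | hgt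
    · have := key_lt y hy.1.le hlt; linarith
    · have := key_gt y hgt hy.2.le; linarith
  · intro x hx hxx
    have := key_lt x hx hxx
    simp only [hh] at this
    linarith
  · intro x hxx hx
    have := key_gt x hxx hx.le
    simp only [hh] at this
    linarith
  · intro x hx
    have hax : Real.cos x = Real.cos |x| := (Real.cos_abs x).symm
    have haxL : Real.cos (x / L) = Real.cos (|x| / L) := by
      rw [← Real.cos_abs (x / L), abs_div, abs_of_pos hL0]
    rw [hax, haxL]
    apply min_eq_left
    have hle : h |x| ≤ 0 := by
      rcases lt_or_eq_of_le hx with hlt | heq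
      · exact (key_lt _ (abs_nonneg x) hlt).le
      · rw [heq]; linarith [hx₀.le, hx₀.ge]
    simp only [hh] at hle
    rw [one_div, inv_mul_eq_div, le_div_iff₀ hε₀]
    nlinarith
  · intro x hx1 hx2
    have hax : Real.cos x = Real.cos |x| := (Real.cos_abs x).symm
    have haxL : Real.cos (x / L) = Real.cos (|x| / L) := by
      rw [← Real.cos_abs (x / L), abs_div, abs_of_pos hL0]
    rw [hax, haxL]
    apply min_eq_right
    have hle : 0 ≤ h |x| := by
      rcases lt_or_eq_of_le hx1 with hlt | heq
      · exact (key_gt _ hlt hx2).le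
      · rw [← heq]; linarith [hx₀.le, hx₀.ge]
    simp only [hh] at hle
    rw [one_div, inv_mul_eq_div, div_le_iff₀ hε₀]
    nlinarith
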